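/- Let G be a bipartite planar graph whose vertex set is partitioned into a set of k 'big' vertices and a set of ℓ 'critical' vertices, with every edge joining a big vertex to a critical vertex, and suppose every critical vertex has degree at least 3. Then ℓ ≤ 2k − 4. -/

import Mathlib

/-- `H` is a minor of `G`. -/
def SimpleGraph.IsMinorOf {α β : Type*} (H : SimpleGraph β) (G : SimpleGraph α) : Prop :=
  ∃ f : β → Set α,
    (∀ b, (f b).Nonempty) ∧
    (∀ b b', b ≠ b' → Disjoint (f b) (f b')) ∧
    (∀ b, (G.induce (f b)).Connected) ∧
    (∀ b b', H.Adj b b' → ∃ u ∈ f b, ∃ v ∈ f b', G.Adj u v)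

namespace K33Work

open SimpleGraph
open scoped Classical

variable {V : Type*}

/-- connectivity of a set via walks staying inside the set -/
def ConnOn (G : SimpleGraph V) (s : Set V) : Prop :=
  s.Nonempty ∧ ∀ u ∈ s, ∀ v ∈ s, ∃ p : G.Walk u v, ∀ w ∈ p.support, w ∈ s

lemma connOn_singleton (G : SimpleGraph V) (v : V) : ConnOn G {v} := by
  refine ⟨⟨v, rfl⟩, ?_⟩
  rintro u rfl w rfl
  exact ⟨SimpleGraph.Walk.nil, by simp⟩

lemma walk_to_induce {G : SimpleGraph V} {s : Set V} {u v : V}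
    (p : G.Walk u v) (hp : ∀ w ∈ p.support, w ∈ s) (hu : u ∈ s) (hv : v ∈ s) :
    (G.induce s).Reachable ⟨u, hu⟩ ⟨v, hv⟩ := by
  induction p with
  | nil => rfl
  | @cons a b c h q ih =>
      have hb : b ∈ s := hp b (by simp)
      have : (G.induce s).Adj ⟨a, hu⟩ ⟨b, hb⟩ := by
        simp [comap_adj, h]
      exact (SimpleGraph.Adj.reachable this).trans
        (ih (fun w hw => hp w (by simp [hw])) hb hv)

lemma induce_walk_down {G : SimpleGraph V} {s : Set V} {u v : ↑s}
    (p : (G.induce s).Walk u v) :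
    ∃ q : G.Walk u.1 v.1, ∀ w ∈ q.support, w ∈ s := by
  induction p with
  | nil => exact ⟨SimpleGraph.Walk.nil, by simp⟩
  | @cons a b c h q ih =>
      obtain ⟨q', hq'⟩ := ih
      have hab : G.Adj a.1 b.1 := h
      refine ⟨SimpleGraph.Walk.cons hab q', ?_⟩
      intro w hw
      rw [SimpleGraph.Walk.support_cons] at hw
      rcases List.mem_cons.1 hw with rfl | hw'
      · exact a.2
      · exact hq' w hw'

lemma connOn_iff_induce_connected {G : SimpleGraph V} {s : Set V} :
    ConnOn G s ↔ (G.induce s).Connected := by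
  constructor
  · rintro ⟨⟨x, hx⟩, h⟩
    rw [SimpleGraph.connected_iff]
    refine ⟨?_, ⟨⟨x, hx⟩⟩⟩
    rintro ⟨u, hu⟩ ⟨v, hv⟩
    obtain ⟨p, hp⟩ := h u hu v hv
    exact walk_to_induce p hp hu hv
  · intro hc
    obtain ⟨x, hx⟩ := hc.nonempty.some
    refine ⟨⟨x, hx⟩, ?_⟩
    intro u hu v hv
    obtain ⟨p⟩ := hc.preconnected ⟨u, hu⟩ ⟨v, hv⟩
    exact induce_walk_down p

lemma connOn_mono {G G' : SimpleGraph V} (h : G ≤ G') {s : Set V} (hc : ConnOn G s) :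
    ConnOn G' s := by
  obtain ⟨hne, hc⟩ := hc
  refine ⟨hne, fun u hu v hv => ?_⟩
  obtain ⟨p, hp⟩ := hc u hu v hv
  refine ⟨SimpleGraph.Walk.mapLe h p, ?_⟩
  intro w hw
  exact hp w (by simpa [SimpleGraph.Walk.mapLe, SimpleGraph.Walk.support_map] using hw)

lemma isMinorOf_mono {β : Type*} {H : SimpleGraph β} {G G' : SimpleGraph V}
    (h : G ≤ G') (hm : H.IsMinorOf G) : H.IsMinorOf G' := by
  obtain ⟨f, h1, h2, h3, h4⟩ := hm
  refine ⟨f, h1, h2, fun b => ?_, fun b b' hbb => ?_⟩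
  · exact connOn_iff_induce_connected.1
      (connOn_mono h (connOn_iff_induce_connected.2 (h3 b)))
  · obtain ⟨u, hu, v, hv, huv⟩ := h4 b b' hbb
    exact ⟨u, hu, v, hv, h huv⟩

/-- build a K33 minor from six sets -/
lemma mk_K33 {G : SimpleGraph V} (L R : Fin 3 → Set V)
    (hLc : ∀ i, ConnOn G (L i)) (hRc : ∀ i, ConnOn G (R i))
    (hLL : ∀ i j, i ≠ j → Disjoint (L i) (L j))
    (hRR : ∀ i j, i ≠ j → Disjoint (R i) (R j))
    (hLR : ∀ i j, Disjoint (L i) (R j))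
    (hadj : ∀ i j, ∃ u ∈ L i, ∃ v ∈ R j, G.Adj u v) :
    (completeBipartiteGraph (Fin 3) (Fin 3)).IsMinorOf G := by
  refine ⟨fun x => Sum.elim L R x, ?_, ?_, ?_, ?_⟩
  · rintro (i | i)
    · exact (hLc i).1
    · exact (hRc i).1
  · rintro (i | i) (j | j) hij <;> simp only [Sum.elim_inl, Sum.elim_inr]
    · exact hLL i j (by simpa using hij)
    · exact hLR i j
    · exact (hLR j i).symm
    · exact hRR i j (by simpa using hij)
  · rintro (i | i) <;> rw [← connOn_iff_induce_connected]
    · exact hLc i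
    · exact hRc i
  · rintro (i | i) (j | j) hadj' <;> simp only [completeBipartiteGraph_adj] at hadj' <;>
      simp only [Sum.elim_inl, Sum.elim_inr]
    · simp at hadj'
    · exact hadj i j
    · obtain ⟨u, hu, v, hv, huv⟩ := hadj j i
      exact ⟨v, hv, u, hu, huv.symm⟩
    · simp at hadj'
  


/-- delete all edges touching `D` -/
def restrictAway (G : SimpleGraph V) (D : Set V) : SimpleGraph V where
  Adj u v := G.Adj u v ∧ u ∉ D ∧ v ∉ D
  symm := ⟨fun u v ⟨h, hu, hv⟩ => ⟨h.symm, hv, hu⟩⟩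
  loopless := ⟨fun u ⟨h, _, _⟩ => G.loopless.irrefl u h⟩

lemma restrictAway_le (G : SimpleGraph V) (D : Set V) : restrictAway G D ≤ G :=
  fun _ _ h => h.1

/-- contract the set `W` onto the vertex `x`; the other vertices of `W` become isolated. -/
def contractTo (G : SimpleGraph V) (W : Set V) (x : V) : SimpleGraph V where
  Adj u v := u ≠ v ∧ ((G.Adj u v ∧ u ∉ W ∧ v ∉ W) ∨
    (u = x ∧ v ∉ W ∧ ∃ w ∈ W, G.Adj w v) ∨ (v = x ∧ u ∉ W ∧ ∃ w ∈ W, G.Adj w u))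
  symm := ⟨by
    rintro u v ⟨hne, h | h | h⟩
    · exact ⟨hne.symm, Or.inl ⟨h.1.symm, h.2.2, h.2.1⟩⟩
    · exact ⟨hne.symm, Or.inr (Or.inr h)⟩
    · exact ⟨hne.symm, Or.inr (Or.inl h)⟩⟩
  loopless := ⟨fun u h => h.1 rfl⟩

lemma walk_transfer {G G' : SimpleGraph V} {s : Set V}
    (hAB : ∀ a b, a ∈ s → b ∈ s → G'.Adj a b → G.Adj a b) :
    ∀ {u v : V} (p : G'.Walk u v), (∀ w ∈ p.support, w ∈ s) →
      ∃ q : G.Walk u v, ∀ w ∈ q.support, w ∈ s := by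
  intro u v p
  induction p with
  | nil => exact fun h => ⟨SimpleGraph.Walk.nil, h⟩
  | @cons a b c h q ih =>
      intro hs
      have ha : a ∈ s := hs a (by simp)
      have hb : b ∈ s := hs b (by simp)
      obtain ⟨q', hq'⟩ := ih (fun w hw => hs w (by simp [SimpleGraph.Walk.support_cons, hw]))
      refine ⟨SimpleGraph.Walk.cons (hAB a b ha hb h) q', ?_⟩
      intro w hw
      rw [SimpleGraph.Walk.support_cons] at hw
      rcases List.mem_cons.1 hw with rfl | hw'
      · exact ha
      · exact hq' w hw'



abbrev K33 : SimpleGraph (Fin 3 ⊕ Fin 3) := completeBipartiteGraph (Fin 3) (Fin 3)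

lemma K33_no_isolated : ∀ i : Fin 3 ⊕ Fin 3, ∃ j, K33.Adj i j := by
  rintro (i | i)
  · exact ⟨Sum.inr 0, by simp⟩
  · exact ⟨Sum.inl 0, by simp⟩

lemma connOn_transfer {G G' : SimpleGraph V} {s : Set V}
    (hAB : ∀ a b, a ∈ s → b ∈ s → G'.Adj a b → G.Adj a b) (h : ConnOn G' s) :
    ConnOn G s :=
  ⟨h.1, fun u hu v hv => by
    obtain ⟨p, hp⟩ := h.2 u hu v hv
    exact walk_transfer hAB p hp⟩

lemma branch_not_isolated {G : SimpleGraph V} {f : Fin 3 ⊕ Fin 3 → Set V}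
    (hconn : ∀ b, (G.induce (f b)).Connected)
    (hadj : ∀ b b', K33.Adj b b' → ∃ u ∈ f b, ∃ v ∈ f b', G.Adj u v)
    {i : Fin 3 ⊕ Fin 3} {v : V} (hv : v ∈ f i) (hiso : ∀ u, ¬ G.Adj v u) : False := by
  by_cases hsing : ∃ u ∈ f i, u ≠ v
  · obtain ⟨u, hu, hne⟩ := hsing
    obtain ⟨p, hp⟩ := (connOn_iff_induce_connected.2 (hconn i)).2 v hv u hu
    cases p with
    | nil => exact hne rfl
    | cons h q => exact hiso _ h
  · push_neg at hsing
    obtain ⟨j, hj⟩ := K33_no_isolated i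
    obtain ⟨u, hu, w, hw, huw⟩ := hadj i j hj
    rw [hsing u hu] at huw
    exact hiso w huw

lemma contract_lift {G : SimpleGraph V} {W : Set V} {x hub : V} (hx : x ∈ W) (hhub : hub ∈ W)
    (hstar : ∀ w ∈ W, w = hub ∨ G.Adj w hub)
    (hm : K33.IsMinorOf (contractTo G W x)) : K33.IsMinorOf G := by
  classical
  obtain ⟨f, hne, hdis, hconn, hadj⟩ := hm
  have walkInW : ∀ u ∈ W, ∃ p : G.Walk u x, ∀ w ∈ p.support, w ∈ W := by
    have hWx : ∀ a ∈ W, ∃ p : G.Walk a hub, ∀ w ∈ p.support, w ∈ W := by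
      intro a ha
      rcases hstar a ha with rfl | h
      · exact ⟨SimpleGraph.Walk.nil, by simpa using ha⟩
      · refine ⟨SimpleGraph.Walk.cons h SimpleGraph.Walk.nil, ?_⟩
        intro w hw
        simp only [SimpleGraph.Walk.support_cons, SimpleGraph.Walk.support_nil] at hw
        rcases List.mem_cons.1 hw with rfl | hw'
        · exact ha
        · simp at hw'; subst hw'; exact hhub
    intro u hu
    obtain ⟨p1, h1⟩ := hWx u hu
    obtain ⟨p2, h2⟩ := hWx x hx
    refine ⟨p1.append p2.reverse, ?_⟩
    intro w hw
    rcases (SimpleGraph.Walk.mem_support_append_iff _ _).1 hw with h | h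
    · exact h1 w h
    · exact h2 w (by simpa using h)
  have hWf : ∀ i v, v ∈ f i → v ∈ W → v = x := by
    intro i v hv hvW
    by_contra hne'
    refine branch_not_isolated hconn hadj hv ?_
    rintro u ⟨hneq, h1 | h2 | h3⟩
    · exact h1.2.1 hvW
    · exact hne' h2.1
    · exact h3.2.1 hvW
  set F : Fin 3 ⊕ Fin 3 → Set V := fun i => f i ∪ (if x ∈ f i then W else ∅) with hF
  have hsubF : ∀ i, f i ⊆ F i := fun i => Set.subset_union_left
  have hWsub : ∀ i, x ∈ f i → W ⊆ F i := by
    intro i hxi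
    simp only [hF, if_pos hxi]
    exact Set.subset_union_right
  refine ⟨F, ?_, ?_, ?_, ?_⟩
  · exact fun i => (hne i).mono (hsubF i)
  · intro i j hij
    rw [Set.disjoint_left]
    intro u hui huj
    have split : ∀ l, u ∈ F l → u ∈ f l ∨ (x ∈ f l ∧ u ∈ W) := by
      intro l hl
      rcases hl with h | h
      · exact Or.inl h
      · by_cases hxl : x ∈ f l
        · exact Or.inr ⟨hxl, by simpa [hF, if_pos hxl] using h⟩
        · simp [hF, if_neg hxl] at h
    have hxij : ¬ (x ∈ f i ∧ x ∈ f j) := by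
      rintro ⟨h1, h2⟩
      exact Set.disjoint_left.1 (hdis i j hij) h1 h2
    rcases split i hui with h1 | ⟨hxi, huW⟩ <;> rcases split j huj with h2 | ⟨hxj, huW'⟩
    · exact Set.disjoint_left.1 (hdis i j hij) h1 h2
    · exact hxij ⟨(hWf i u h1 huW') ▸ h1, hxj⟩
    · exact hxij ⟨hxi, (hWf j u h2 huW) ▸ h2⟩
    · exact hxij ⟨hxi, hxj⟩
  · intro i
    rw [← connOn_iff_induce_connected]
    by_cases hxi : x ∈ f i
    · have hFi : F i = f i ∪ W := by simp [hF, if_pos hxi]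
      rw [hFi]
      have conv : ∀ {u v : V} (p : (contractTo G W x).Walk u v),
          (∀ w ∈ p.support, w ∈ f i) → ∃ q : G.Walk u v, ∀ w ∈ q.support, w ∈ f i ∪ W := by
        intro u v p
        induction p with
        | nil => exact fun h => ⟨SimpleGraph.Walk.nil, fun w hw => Or.inl (h w hw)⟩
        | @cons a b c h q ih =>
            intro hs
            have ha : a ∈ f i := hs a (by simp)
            obtain ⟨q', hq'⟩ := ih (fun w hw => hs w (by simp [SimpleGraph.Walk.support_cons, hw]))
            obtain ⟨hneq, h1 | h2 | h3⟩ := h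
            · refine ⟨SimpleGraph.Walk.cons h1.1 q', ?_⟩
              intro w hw
              rw [SimpleGraph.Walk.support_cons] at hw
              rcases List.mem_cons.1 hw with rfl | hw'
              · exact Or.inl ha
              · exact hq' w hw'
            · -- a = x, ∃ w ∈ W, G.Adj w b
              obtain ⟨rfl, hbW, w0, hw0, hw0b⟩ := h2
              obtain ⟨p1, hp1⟩ := walkInW w0 hw0
              refine ⟨(p1.reverse.append (SimpleGraph.Walk.cons hw0b q')), ?_⟩
              intro w hw
              rcases (SimpleGraph.Walk.mem_support_append_iff _ _).1 hw with hh | hh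
              · exact Or.inr (hp1 w (by simpa using hh))
              · rw [SimpleGraph.Walk.support_cons] at hh
                rcases List.mem_cons.1 hh with rfl | hw'
                · exact Or.inr hw0
                · exact hq' w hw'
            · -- b = x, a ∉ W, ∃ w ∈ W, G.Adj w a
              obtain ⟨rfl, haW, w0, hw0, hw0a⟩ := h3
              obtain ⟨p1, hp1⟩ := walkInW w0 hw0
              refine ⟨SimpleGraph.Walk.cons hw0a.symm (p1.append q'), ?_⟩
              intro w hw
              rw [SimpleGraph.Walk.support_cons] at hw
              rcases List.mem_cons.1 hw with rfl | hw'
              · exact Or.inl ha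
              · rcases (SimpleGraph.Walk.mem_support_append_iff _ _).1 hw' with hh | hh
                · exact Or.inr (hp1 w hh)
                · exact hq' w hh
      have key : ∀ u ∈ f i ∪ W, ∃ p : G.Walk u x, ∀ w ∈ p.support, w ∈ f i ∪ W := by
        intro u hu
        rcases hu with hu | hu
        · obtain ⟨p, hp⟩ := (connOn_iff_induce_connected.2 (hconn i)).2 u hu x hxi
          exact conv p hp
        · obtain ⟨p, hp⟩ := walkInW u hu
          exact ⟨p, fun w hw => Or.inr (hp w hw)⟩
      refine ⟨⟨x, Or.inl hxi⟩, ?_⟩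
      intro u hu v hv
      obtain ⟨p1, hp1⟩ := key u hu
      obtain ⟨p2, hp2⟩ := key v hv
      refine ⟨p1.append p2.reverse, ?_⟩
      intro w hw
      rcases (SimpleGraph.Walk.mem_support_append_iff _ _).1 hw with h | h
      · exact hp1 w h
      · exact hp2 w (by simpa using h)
    · have hFi : F i = f i := by simp [hF, if_neg hxi]
      rw [hFi]
      refine connOn_transfer ?_ (connOn_iff_induce_connected.2 (hconn i))
      rintro a b ha hb ⟨hneq, h1 | h2 | h3⟩
      · exact h1.1
      · exact absurd (h2.1 ▸ ha) hxi
      · exact absurd (h3.1 ▸ hb) hxi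
  · intro i j hij
    obtain ⟨u, hu, v, hv, huv⟩ := hadj i j hij
    obtain ⟨hneq, h1 | h2 | h3⟩ := huv
    · exact ⟨u, hsubF i hu, v, hsubF j hv, h1.1⟩
    · obtain ⟨rfl, hbW, w0, hw0, hw0v⟩ := h2
      exact ⟨w0, hWsub i hu hw0, v, hsubF j hv, hw0v⟩
    · obtain ⟨rfl, haW, w0, hw0, hw0u⟩ := h3
      exact ⟨u, hsubF i hu, w0, hWsub j hv hw0, hw0u.symm⟩


lemma path_avoids_leaf {G : SimpleGraph V} {u v w : V} (p : G.Walk u v) (hp : p.IsPath)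
    (hdeg : ∀ a b, G.Adj w a → G.Adj w b → a = b)
    (hwu : w ≠ u) (hwv : w ≠ v) : w ∉ p.support := by
  induction p with
  | nil => simpa using hwu
  | @cons a b c h q ih =>
      intro hmem
      rw [SimpleGraph.Walk.support_cons] at hmem
      rcases List.mem_cons.1 hmem with rfl | hmem'
      · exact hwu rfl
      · by_cases hwb : w = b
        · subst hwb
          cases q with
          | nil => exact hwv rfl
          | @cons b' c' v' h2 q2 =>
              have : a = c' := hdeg a c' h.symm h2
              have hnot : a ∉ (SimpleGraph.Walk.cons h2 q2).support :=
                ((SimpleGraph.Walk.cons_isPath_iff _ _).1 hp).2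
              refine hnot ?_
              rw [SimpleGraph.Walk.support_cons]
              exact List.mem_cons.2 (Or.inr (this ▸ q2.start_mem_support))
        · exact ih ((SimpleGraph.Walk.cons_isPath_iff _ _).1 hp).1
            (fun hh => hwb hh) hwv hmem'
  
lemma reachable_isolated {G : SimpleGraph V} {v u : V} (hiso : ∀ w, ¬ G.Adj v w)
    (h : G.Reachable v u) : u = v := by
  obtain ⟨p⟩ := h
  cases p with
  | nil => rfl
  | cons h q => exact absurd h (hiso _)

lemma walk_support_reach {G : SimpleGraph V} {a b : V} (p : G.Walk a b) {w : V}
    (hw : w ∈ p.support) : G.Reachable a w := by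
  classical
  exact ⟨p.takeUntil w hw⟩

lemma connOn_reachSet (G : SimpleGraph V) (u0 : V) : ConnOn G {v | G.Reachable u0 v} := by
  refine ⟨⟨u0, by exact SimpleGraph.Reachable.refl u0⟩, ?_⟩
  intro u hu v hv
  obtain ⟨p1⟩ := hu
  obtain ⟨p2⟩ := hv
  refine ⟨p1.reverse.append p2, ?_⟩
  intro w hw
  rcases (SimpleGraph.Walk.mem_support_append_iff _ _).1 hw with h | h
  · exact walk_support_reach p1 (by simpa using h)
  · exact walk_support_reach p2 h

lemma exists_three {s : Finset V} (h : 3 ≤ s.card) :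
    ∃ a b c, a ∈ s ∧ b ∈ s ∧ c ∈ s ∧ a ≠ b ∧ a ≠ c ∧ b ≠ c := by
  classical
  obtain ⟨a, ha⟩ := Finset.card_pos.1 (show 0 < s.card by omega)
  have h2 : 2 ≤ (s.erase a).card := by
    have := Finset.card_erase_of_mem ha; omega
  obtain ⟨b, hb⟩ := Finset.card_pos.1 (show 0 < (s.erase a).card by omega)
  have hb' : b ∈ s.erase a := hb
  have h3 : 1 ≤ ((s.erase a).erase b).card := by
    have := Finset.card_erase_of_mem hb'; omega
  obtain ⟨c, hc⟩ := Finset.card_pos.1 (by omega : 0 < ((s.erase a).erase b).card)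
  have hbne : b ≠ a := (Finset.mem_erase.1 hb').1
  have hcb : c ≠ b := (Finset.mem_erase.1 hc).1
  have hca : c ≠ a := (Finset.mem_erase.1 (Finset.mem_erase.1 hc).2).1
  exact ⟨a, b, c, ha, (Finset.mem_erase.1 hb').2,
    (Finset.mem_erase.1 (Finset.mem_erase.1 hc).2).2, hbne.symm, hca.symm, hcb.symm⟩


open scoped Classical in
noncomputable def bipRestrict (G : SimpleGraph V) (A B : Finset V) : SimpleGraph V where
  Adj u v := G.Adj u v ∧ ((u ∈ A ∧ v ∈ B) ∨ (u ∈ B ∧ v ∈ A))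
  symm := ⟨by rintro u v ⟨h, h1 | h2⟩
              exacts [⟨h.symm, Or.inr ⟨h1.2, h1.1⟩⟩, ⟨h.symm, Or.inl ⟨h2.2, h2.1⟩⟩]⟩
  loopless := ⟨fun u h => G.loopless.irrefl u h.1⟩

lemma bipRestrict_le (G : SimpleGraph V) (A B : Finset V) : bipRestrict G A B ≤ G :=
  fun _ _ h => h.1

open scoped Classical in
noncomputable def touchRestrict (G : SimpleGraph V) (Bc : Finset V) : SimpleGraph V where
  Adj u v := G.Adj u v ∧ (u ∈ Bc ∨ v ∈ Bc)
  symm := ⟨by rintro u v ⟨h, h1⟩; exact ⟨h.symm, h1.symm⟩⟩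
  loopless := ⟨fun u h => G.loopless.irrefl u h.1⟩

lemma touchRestrict_le (G : SimpleGraph V) (Bc : Finset V) : touchRestrict G Bc ≤ G :=
  fun _ _ h => h.1


lemma decomp [Fintype V] {k : ℕ} {G : SimpleGraph V} {A B : Finset V} {N : V → Finset V}
    (IH : ∀ k' < k, ∀ (G : SimpleGraph V) (A B : Finset V) (N : V → Finset V),
      A.card = k' → 3 ≤ k' → Disjoint A B →
      (∀ u v, G.Adj u v → (u ∈ A ∧ v ∈ B) ∨ (u ∈ B ∧ v ∈ A)) →
      (∀ b ∈ B, ∀ u, G.Adj b u ↔ u ∈ N b) → (∀ b ∈ B, (N b).card = 3) →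
      2 * k' ≤ B.card + 3 → K33.IsMinorOf G)
    (hA : A.card = k) (hAB : Disjoint A B)
    (hbip : ∀ u v, G.Adj u v → (u ∈ A ∧ v ∈ B) ∨ (u ∈ B ∧ v ∈ A))
    (hNadj : ∀ b ∈ B, ∀ u, G.Adj b u ↔ u ∈ N b) (hN3 : ∀ b ∈ B, (N b).card = 3)
    (S : Finset V) (hSA : S ⊆ A) (hK : ¬ K33.IsMinorOf G) :
    B.card ≤ (B.filter (fun b => N b ⊆ S)).card + 2 * (A \ S).card
    ∨ ∃ u0 ∈ B, ¬ (N u0 ⊆ S) ∧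
       (3 ≤ (S.filter (fun a => ∃ v, (restrictAway G ↑S).Reachable u0 v ∧ G.Adj v a)).card ∨
        A.card ≤ ((A \ S).filter (fun a => (restrictAway G ↑S).Reachable u0 a)).card +
          (S.filter (fun a => ∃ v, (restrictAway G ↑S).Reachable u0 v ∧ G.Adj v a)).card) := by
  set GS := restrictAway G ↑S with hGS
  by_cases hesc : ∃ u0 ∈ B, ¬ (N u0 ⊆ S) ∧
       (3 ≤ (S.filter (fun a => ∃ v, GS.Reachable u0 v ∧ G.Adj v a)).card ∨
        A.card ≤ ((A \ S).filter (fun a => GS.Reachable u0 a)).card +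
          (S.filter (fun a => ∃ v, GS.Reachable u0 v ∧ G.Adj v a)).card)
  · exact Or.inr hesc
  push_neg at hesc
  left
  set φ : V → GS.ConnectedComponent := fun v => GS.connectedComponentMk v with hφ
  set rest := B.filter (fun b => ¬ N b ⊆ S) with hrest
  have hsplit : (B.filter (fun b => N b ⊆ S)).card + rest.card = B.card :=
    Finset.card_filter_add_card_filter_not _
  set T := rest.image φ with hT
  have hfib : rest.card = ∑ c ∈ T, (rest.filter (fun b => φ b = c)).card :=
    Finset.card_eq_sum_card_fiberwise (fun b hb => Finset.mem_image_of_mem φ hb)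
  -- per-component bound
  have hcomp : ∀ c ∈ T, (rest.filter (fun b => φ b = c)).card
      ≤ 2 * ((A \ S).filter (fun a => φ a = c)).card := by
    intro c hc
    obtain ⟨u0, hu0rest, hu0c⟩ := Finset.mem_image.1 hc
    obtain ⟨hu0B, hu0NS⟩ := Finset.mem_filter.1 hu0rest
    have hu0S : u0 ∉ S := fun hs => (Finset.disjoint_left.1 hAB (hSA hs)) hu0B
    have ReachIff : ∀ a, φ a = c ↔ GS.Reachable u0 a := by
      intro a
      rw [← hu0c]
      constructor
      · intro h
        exact (SimpleGraph.ConnectedComponent.eq.1 h.symm)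
      · intro h
        exact (SimpleGraph.ConnectedComponent.eq.2 h).symm
    obtain ⟨hatt2, hklt⟩ := hesc u0 hu0B hu0NS
    set attR := S.filter (fun a => ∃ v, GS.Reachable u0 v ∧ G.Adj v a) with hattR
    set AcR := (A \ S).filter (fun a => GS.Reachable u0 a) with hAcR
    have hAcF : (A \ S).filter (fun a => φ a = c) = AcR := by
      apply Finset.filter_congr
      intro a _
      rw [ReachIff a]
    have hBcF : rest.filter (fun b => φ b = c) = rest.filter (fun b => GS.Reachable u0 b) := by
      apply Finset.filter_congr
      intro b _
      rw [ReachIff b]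
    set Bc := rest.filter (fun b => GS.Reachable u0 b) with hBc
    set A' := AcR ∪ attR with hA'
    have hdisjA' : Disjoint AcR attR := by
      rw [Finset.disjoint_left]
      intro a ha ha'
      exact (Finset.mem_sdiff.1 (Finset.mem_of_mem_filter a ha)).2 (Finset.mem_of_mem_filter a ha')
    have hcardA' : A'.card = AcR.card + attR.card := Finset.card_union_of_disjoint hdisjA'
    -- N u0 ⊆ A'
    have hNsub : N u0 ⊆ A' := by
      intro a ha
      have hadj : G.Adj u0 a := (hNadj u0 hu0B a).2 ha
      have haA : a ∈ A := by
        rcases hbip u0 a hadj with ⟨h1, _⟩ | ⟨_, h2⟩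
        · exact absurd h1 (fun h => Finset.disjoint_left.1 hAB h hu0B)
        · exact h2
      by_cases haS : a ∈ S
      · exact Finset.mem_union_right _ (Finset.mem_filter.2 ⟨haS, u0, Reachable.refl u0, hadj⟩)
      · refine Finset.mem_union_left _ (Finset.mem_filter.2 ⟨Finset.mem_sdiff.2 ⟨haA, haS⟩, ?_⟩)
        exact SimpleGraph.Adj.reachable ⟨hadj, hu0S, haS⟩
    have h3kc : 3 ≤ A'.card := by
      calc 3 = (N u0).card := (hN3 u0 hu0B).symm
      _ ≤ A'.card := Finset.card_le_card hNsub
    have hkclt : A'.card < k := by rw [hcardA']; omega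
    -- the piece graph
    set Gc := touchRestrict G Bc with hGc
    have hBcB : Bc ⊆ B := fun b hb => Finset.mem_of_mem_filter b (Finset.mem_of_mem_filter b hb)
    have hbip' : ∀ u v, Gc.Adj u v → (u ∈ A' ∧ v ∈ Bc) ∨ (u ∈ Bc ∧ v ∈ A') := by
      have key : ∀ u v, Gc.Adj u v → v ∈ Bc → u ∈ A' := by
        intro u v hGuv hvBc
        have huA : u ∈ A := by
          rcases hbip u v hGuv.1 with ⟨h1, _⟩ | ⟨h1, h2⟩
          · exact h1
          · exact absurd (hBcB hvBc) (fun h => Finset.disjoint_left.1 hAB h2 h)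
        have hreach : GS.Reachable u0 v := (Finset.mem_filter.1 hvBc).2
        by_cases huS : u ∈ S
        · exact Finset.mem_union_right _
            (Finset.mem_filter.2 ⟨huS, v, hreach, hGuv.1.symm⟩)
        · have hvS : v ∉ S := fun hs => Finset.disjoint_left.1 hAB (hSA hs) (hBcB hvBc)
          refine Finset.mem_union_left _ (Finset.mem_filter.2 ⟨Finset.mem_sdiff.2 ⟨huA, huS⟩, ?_⟩)
          exact hreach.trans (SimpleGraph.Adj.reachable ⟨hGuv.1.symm, hvS, huS⟩)
      intro u v hGuv
      rcases hGuv.2 with h | h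
      · exact Or.inr ⟨h, key v u hGuv.symm h⟩
      · exact Or.inl ⟨key u v hGuv h, h⟩
    have hNadj' : ∀ b ∈ Bc, ∀ u, Gc.Adj b u ↔ u ∈ N b := by
      intro b hb u
      constructor
      · intro h
        exact (hNadj b (hBcB hb) u).1 h.1
      · intro h
        exact ⟨(hNadj b (hBcB hb) u).2 h, Or.inl hb⟩
    by_cases h2 : 2 * A'.card ≤ Bc.card + 3
    · exfalso
      refine hK (isMinorOf_mono (touchRestrict_le G Bc) ?_)
      exact IH A'.card hkclt Gc A' Bc N rfl h3kc
        (Finset.disjoint_left.2 (fun a ha hb => by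
          have haA : a ∈ A := by
            rcases Finset.mem_union.1 ha with h | h
            · exact (Finset.mem_sdiff.1 (Finset.mem_of_mem_filter a h)).1
            · exact hSA (Finset.mem_of_mem_filter a h)
          exact Finset.disjoint_left.1 hAB haA (hBcB hb)))
        hbip' hNadj' (fun b hb => hN3 b (hBcB hb)) h2
    · rw [hAcF, hBcF]
      omega
  -- sum of Ac over components
  have hAcSum : ∑ c ∈ T, ((A \ S).filter (fun a => φ a = c)).card ≤ (A \ S).card := by
    set s' := (A \ S).filter (fun a => φ a ∈ T) with hs'
    have h1 : s'.card = ∑ c ∈ T, (s'.filter (fun a => φ a = c)).card :=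
      Finset.card_eq_sum_card_fiberwise (fun a ha => (Finset.mem_filter.1 ha).2)
    have h2 : ∀ c ∈ T, s'.filter (fun a => φ a = c) = (A \ S).filter (fun a => φ a = c) := by
      intro c hc
      ext a
      simp only [hs', Finset.mem_filter, and_assoc]
      constructor
      · rintro ⟨h1', _, h3'⟩; exact ⟨h1', h3'⟩
      · rintro ⟨h1', h3'⟩; exact ⟨h1', h3' ▸ hc, h3'⟩
    calc ∑ c ∈ T, ((A \ S).filter (fun a => φ a = c)).card
        = ∑ c ∈ T, (s'.filter (fun a => φ a = c)).card := by
          refine Finset.sum_congr rfl (fun c hc => by rw [h2 c hc])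
      _ = s'.card := h1.symm
      _ ≤ (A \ S).card := Finset.card_le_card (Finset.filter_subset _ _)
  have : rest.card ≤ 2 * (A \ S).card := by
    calc rest.card = ∑ c ∈ T, (rest.filter (fun b => φ b = c)).card := hfib
    _ ≤ ∑ c ∈ T, 2 * ((A \ S).filter (fun a => φ a = c)).card := Finset.sum_le_sum hcomp
    _ = 2 * ∑ c ∈ T, ((A \ S).filter (fun a => φ a = c)).card := by rw [Finset.mul_sum]
    _ ≤ 2 * (A \ S).card := by omega
  omega

lemma mk_K33_finsets {G : SimpleGraph V} {A B : Finset V} (hAB : Disjoint A B)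
    (av bv : Fin 3 → V) (hav : ∀ i, av i ∈ A) (hbv : ∀ i, bv i ∈ B)
    (hai : ∀ i j, i ≠ j → av i ≠ av j) (hbi : ∀ i j, i ≠ j → bv i ≠ bv j)
    (hadj : ∀ i j, G.Adj (av i) (bv j)) : K33.IsMinorOf G := by
  refine mk_K33 (fun i => {av i}) (fun i => {bv i}) (fun i => connOn_singleton G _)
    (fun i => connOn_singleton G _) ?_ ?_ ?_ ?_
  · intro i j hij
    simpa [Set.disjoint_singleton] using hai i j hij
  · intro i j hij
    simpa [Set.disjoint_singleton] using hbi i j hij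
  · intro i j
    have : av i ≠ bv j := fun h => Finset.disjoint_left.1 hAB (hav i) (h ▸ hbv j)
    simpa [Set.disjoint_singleton] using this
  · intro i j
    exact ⟨av i, rfl, bv j, rfl, hadj i j⟩

lemma mk_K33_221 {G : SimpleGraph V} (x y c1 c2 c3 : V) (Cs : Set V)
    (hxy : x ≠ y) (hxC : x ∉ Cs) (hyC : y ∉ Cs)
    (hc12 : c1 ≠ c2) (hc13 : c1 ≠ c3) (hc23 : c2 ≠ c3)
    (hCconn : ConnOn G Cs)
    (hne : ∀ c, (c = c1 ∨ c = c2 ∨ c = c3) → x ≠ c ∧ y ≠ c ∧ c ∉ Cs)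
    (hadj : ∀ c, (c = c1 ∨ c = c2 ∨ c = c3) → G.Adj x c ∧ G.Adj y c ∧ ∃ v ∈ Cs, G.Adj v c) :
    K33.IsMinorOf G := by
  have hC3 : ∀ j : Fin 3, (![c1, c2, c3] j = c1 ∨ ![c1, c2, c3] j = c2 ∨ ![c1, c2, c3] j = c3) := by
    intro j
    fin_cases j <;> simp
  refine mk_K33 ![{x}, {y}, Cs] (fun j => {![c1, c2, c3] j}) ?_ (fun j => connOn_singleton G _)
    ?_ ?_ ?_ ?_
  · intro i
    fin_cases i
    · exact connOn_singleton G x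
    · exact connOn_singleton G y
    · exact hCconn
  · intro i j hij
    fin_cases i <;> fin_cases j <;>
      first
        | exact absurd rfl hij
        | (simp only [Matrix.cons_val_zero, Matrix.cons_val_one, Matrix.head_cons,
            Matrix.cons_val_two, Matrix.tail_cons]
           first
             | simpa [Set.disjoint_singleton] using hxy
             | simpa [Set.disjoint_singleton] using hxy.symm
             | simpa [Set.disjoint_left] using hxC
             | simpa [Set.disjoint_left] using hyC
             | simpa [Set.disjoint_right] using hxC
             | simpa [Set.disjoint_right] using hyC)
  · intro i j hij
    have h1 := hC3 i
    have h2 := hC3 j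
    have : ![c1, c2, c3] i ≠ ![c1, c2, c3] j := by
      fin_cases i <;> fin_cases j <;>
        first
          | exact absurd rfl hij
          | simpa using hc12 | simpa using hc13 | simpa using hc23
          | simpa using hc12.symm | simpa using hc13.symm | simpa using hc23.symm
          | simpa using (Ne.symm hc12) | simpa using (Ne.symm hc13) | simpa using (Ne.symm hc23)
    simpa [Set.disjoint_singleton] using this
  · intro i j
    obtain ⟨hx', hy', hC'⟩ := hne _ (hC3 j)
    fin_cases i
    · simpa [Set.disjoint_singleton] using hx'
    · simpa [Set.disjoint_singleton] using hy'
    · simp only [Matrix.cons_val_two, Matrix.tail_cons, Matrix.head_cons,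
        Set.disjoint_singleton_right]
      exact hC'
  · intro i j
    obtain ⟨hx', hy', v, hv, hvadj⟩ := hadj _ (hC3 j)
    fin_cases i
    · exact ⟨x, rfl, _, rfl, hx'⟩
    · exact ⟨y, rfl, _, rfl, hy'⟩
    · exact ⟨v, hv, _, rfl, hvadj⟩

theorem core [Fintype V] (k : ℕ) : ∀ (G : SimpleGraph V) (A B : Finset V) (N : V → Finset V),
    A.card = k → 3 ≤ k → Disjoint A B →
    (∀ u v, G.Adj u v → (u ∈ A ∧ v ∈ B) ∨ (u ∈ B ∧ v ∈ A)) →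
    (∀ b ∈ B, ∀ u, G.Adj b u ↔ u ∈ N b) → (∀ b ∈ B, (N b).card = 3) →
    2 * k ≤ B.card + 3 → K33.IsMinorOf G := by
  induction k using Nat.strong_induction_on with
  | _ k IH =>
  intro G A B N hA hk3 hAB hbip hNadj hN3 hcard
  by_contra hK
  have adjBA : ∀ b ∈ B, ∀ a ∈ N b, G.Adj b a := fun b hb a ha => (hNadj b hb a).2 ha
  have hNsubA : ∀ b ∈ B, N b ⊆ A := by
    intro b hb a ha
    rcases hbip b a (adjBA b hb a ha) with ⟨h1, _⟩ | ⟨_, h2⟩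
    · exact absurd h1 (fun h => Finset.disjoint_left.1 hAB h hb)
    · exact h2
  have hBA : ∀ b ∈ B, b ∉ A := fun b hb h => Finset.disjoint_left.1 hAB h hb
  rcases Nat.lt_or_ge k 4 with hk4 | hk4
  · -- base case k = 3
    have hk : A.card = 3 := by omega
    have hB3 : 3 ≤ B.card := by omega
    have hNA : ∀ b ∈ B, N b = A := fun b hb =>
      Finset.eq_of_subset_of_card_le (hNsubA b hb) (by rw [hN3 b hb, hk])
    obtain ⟨a1, a2, a3, ha1, ha2, ha3, h12, h13, h23⟩ := exists_three (by omega : 3 ≤ A.card)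
    obtain ⟨d1, d2, d3, hd1, hd2, hd3, g12, g13, g23⟩ := exists_three hB3
    refine hK (mk_K33_finsets hAB ![a1, a2, a3] ![d1, d2, d3] ?_ ?_ ?_ ?_ ?_)
    · intro i; fin_cases i <;> assumption
    · intro i; fin_cases i <;> assumption
    · intro i j hij
      fin_cases i <;> fin_cases j <;>
        first
          | exact absurd rfl hij
          | simpa using h12 | simpa using h13 | simpa using h23
          | simpa using (Ne.symm h12) | simpa using (Ne.symm h13) | simpa using (Ne.symm h23)
    · intro i j hij
      fin_cases i <;> fin_cases j <;>
        first
          | exact absurd rfl hij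
          | simpa using g12 | simpa using g13 | simpa using g23
          | simpa using (Ne.symm g12) | simpa using (Ne.symm g13) | simpa using (Ne.symm g23)
    · intro i j
      have hadj : ∀ a ∈ A, ∀ d ∈ B, G.Adj a d := by
        intro a ha d hd
        exact (adjBA d hd a (by rw [hNA d hd]; exact ha)).symm
      fin_cases i <;> fin_cases j <;>
        simp only [Matrix.cons_val_zero, Matrix.cons_val_one, Matrix.head_cons,
          Matrix.cons_val_two, Matrix.tail_cons] <;>
        first
          | exact hadj _ ha1 _ hd1 | exact hadj _ ha1 _ hd2 | exact hadj _ ha1 _ hd3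
          | exact hadj _ ha2 _ hd1 | exact hadj _ ha2 _ hd2 | exact hadj _ ha2 _ hd3
          | exact hadj _ ha3 _ hd1 | exact hadj _ ha3 _ hd2 | exact hadj _ ha3 _ hd3
  · -- k ≥ 4
    by_cases hdup : ∃ b1 ∈ B, ∃ b2 ∈ B, b1 ≠ b2 ∧ N b1 = N b2
    · obtain ⟨b1, hb1, b2, hb2, hne12, hNeq⟩ := hdup
      set S := N b1 with hS
      have hS3 : S.card = 3 := hN3 b1 hb1
      have hSA : S ⊆ A := hNsubA b1 hb1
      set dupF := B.filter (fun b => N b ⊆ S) with hdupF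
      have hdupB : dupF ⊆ B := Finset.filter_subset _ _
      have hdupEq : ∀ b ∈ dupF, N b = S := by
        intro b hb
        obtain ⟨hbB, hsub⟩ := Finset.mem_filter.1 hb
        exact Finset.eq_of_subset_of_card_le hsub (by rw [hN3 b hbB, hS3])
      obtain ⟨x, y, z, hxS, hyS, hzS, h12, h13, h23⟩ := exists_three (le_of_eq hS3.symm)
      by_cases hq3 : 3 ≤ dupF.card
      · obtain ⟨c1, c2, c3, hc1, hc2, hc3, g12, g13, g23⟩ := exists_three hq3
        refine hK (mk_K33_finsets hAB ![x, y, z] ![c1, c2, c3] ?_ ?_ ?_ ?_ ?_)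
        · intro i; fin_cases i <;> exact hSA (by assumption)
        · intro i; fin_cases i <;> exact hdupB (by assumption)
        · intro i j hij
          fin_cases i <;> fin_cases j <;>
            first
              | exact absurd rfl hij
              | simpa using h12 | simpa using h13 | simpa using h23
              | simpa using (Ne.symm h12) | simpa using (Ne.symm h13) | simpa using (Ne.symm h23)
        · intro i j hij
          fin_cases i <;> fin_cases j <;>
            first
              | exact absurd rfl hij
              | simpa using g12 | simpa using g13 | simpa using g23
              | simpa using (Ne.symm g12) | simpa using (Ne.symm g13) | simpa using (Ne.symm g23)
        · intro i j
          have hadj : ∀ a ∈ S, ∀ c ∈ dupF, G.Adj a c := fun a ha c hc =>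
            (adjBA c (hdupB hc) a (by rw [hdupEq c hc]; exact ha)).symm
          fin_cases i <;> fin_cases j <;>
            simp only [Matrix.cons_val_zero, Matrix.cons_val_one, Matrix.head_cons,
              Matrix.cons_val_two, Matrix.tail_cons] <;>
            first
              | exact hadj _ hxS _ hc1 | exact hadj _ hxS _ hc2 | exact hadj _ hxS _ hc3
              | exact hadj _ hyS _ hc1 | exact hadj _ hyS _ hc2 | exact hadj _ hyS _ hc3
              | exact hadj _ hzS _ hc1 | exact hadj _ hzS _ hc2 | exact hadj _ hzS _ hc3
      · rcases decomp IH hA hAB hbip hNadj hN3 S hSA hK with hcount | hesc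
        · have hAS : (A \ S).card = k - 3 := by
            rw [Finset.card_sdiff_of_subset hSA, hA, hS3]
          rw [← hdupF] at hcount
          omega
        · obtain ⟨u0, hu0B, hu0NS, hor⟩ := hesc
          set GS := restrictAway G (↑S : Set V) with hGS
          set attF := S.filter (fun a => ∃ v, GS.Reachable u0 v ∧ G.Adj v a) with hattF
          have hatt3 : 3 ≤ attF.card := by
            rcases hor with h | h
            · exact h
            · have h1 : ((A \ S).filter (fun a => GS.Reachable u0 a)).card ≤ (A \ S).card :=
                Finset.card_le_card (Finset.filter_subset _ _)
              have hAS : (A \ S).card = k - 3 := by rw [Finset.card_sdiff_of_subset hSA, hA, hS3]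
              have h2 : attF.card ≤ 3 := hS3 ▸ Finset.card_le_card (Finset.filter_subset _ _)
              omega
          have hattEq : attF = S :=
            Finset.eq_of_subset_of_card_le (Finset.filter_subset _ _) (by omega)
          have hadjS : ∀ a ∈ S, ∃ v, GS.Reachable u0 v ∧ G.Adj v a := by
            intro a ha
            have ha' : a ∈ attF := by rw [hattEq]; exact ha
            exact (Finset.mem_filter.1 ha').2
          set Cset := {v : V | GS.Reachable u0 v} with hCset
          have hisoS : ∀ a, a ∈ S → ∀ w, ¬ GS.Adj a w := by
            intro a ha w hadj'
            exact hadj'.2.1 (by simpa using ha)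
          have hCS : ∀ a, a ∈ S → a ∉ Cset := by
            intro a ha hmem
            have heq : u0 = a := reachable_isolated (hisoS a ha) hmem.symm
            exact Finset.disjoint_left.1 hAB (hSA ha) (heq ▸ hu0B)
          have hisoDup : ∀ c, c ∈ dupF → ∀ w, ¬ GS.Adj c w := by
            intro c hc w hadj'
            have hw : w ∈ N c := (hNadj c (hdupB hc) w).1 hadj'.1
            rw [hdupEq c hc] at hw
            exact hadj'.2.2 (by simpa using hw)
          have hCdup : ∀ c, c ∈ dupF → c ∉ Cset := by
            intro c hc hmem
            have heq : u0 = c := reachable_isolated (hisoDup c hc) hmem.symm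
            exact hu0NS (by rw [heq]; exact (Finset.mem_filter.1 hc).2)
          have hb1d : b1 ∈ dupF := Finset.mem_filter.2 ⟨hb1, Finset.Subset.refl _⟩
          have hb2d : b2 ∈ dupF := Finset.mem_filter.2 ⟨hb2, by rw [← hNeq]⟩
          refine hK (mk_K33_221 b1 b2 x y z Cset hne12 (hCdup b1 hb1d) (hCdup b2 hb2d)
            h12 h13 h23 ?_ ?_ ?_)
          · exact connOn_mono (restrictAway_le G (↑S : Set V)) (connOn_reachSet GS u0)
          · intro c hc
            have hcS : c ∈ S := by rcases hc with rfl | rfl | rfl <;> assumption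
            exact ⟨fun h => (hBA b1 hb1) (h ▸ hSA hcS), fun h => (hBA b2 hb2) (h ▸ hSA hcS),
              hCS c hcS⟩
          · intro c hc
            have hcS : c ∈ S := by rcases hc with rfl | rfl | rfl <;> assumption
            obtain ⟨v, hv, hvadj⟩ := hadjS c hcS
            refine ⟨adjBA b1 hb1 c hcS, adjBA b2 hb2 c (by rw [← hNeq]; exact hcS), v, hv, hvadj⟩
    · by_cases hpair : ∃ b1 ∈ B, ∃ b2 ∈ B, b1 ≠ b2 ∧ 2 ≤ (N b1 ∩ N b2).card
      · obtain ⟨b1, hb1, b2, hb2, hne12, hint2⟩ := hpair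
        obtain ⟨x, hx, y, hy, hxy⟩ := Finset.one_lt_card.1 (by omega : 1 < (N b1 ∩ N b2).card)
        set P := B.filter (fun b => x ∈ N b ∧ y ∈ N b) with hP
        by_cases ht3 : 3 ≤ P.card
        · have hxNb1 : x ∈ N b1 := (Finset.mem_inter.1 hx).1
          have hyNb1 : y ∈ N b1 := (Finset.mem_inter.1 hy).1
          have hxA : x ∈ A := hNsubA b1 hb1 hxNb1
          have hyA : y ∈ A := hNsubA b1 hb1 hyNb1
          set S : Finset V := {x, y} with hSdef
          have hS2 : S.card = 2 := Finset.card_pair hxy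
          have hSA : S ⊆ A := by
            intro a ha
            rcases Finset.mem_insert.1 ha with rfl | ha'
            · exact hxA
            · rw [Finset.mem_singleton.1 ha']; exact hyA
          rcases decomp IH hA hAB hbip hNadj hN3 S hSA hK with hcount | hesc
          · have hq0 : B.filter (fun b => N b ⊆ S) = ∅ := by
              rw [Finset.filter_eq_empty_iff]
              intro b hb hsub
              have hle := Finset.card_le_card hsub
              rw [hN3 b hb, hS2] at hle
              omega
            rw [hq0] at hcount
            have hAS : (A \ S).card = k - 2 := by rw [Finset.card_sdiff_of_subset hSA, hA, hS2]
            simp only [Finset.card_empty, zero_add] at hcount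
            omega
          · obtain ⟨u0, hu0B, hu0NS, hor⟩ := hesc
            set GS := restrictAway G (↑S : Set V) with hGS
            set attF := S.filter (fun a => ∃ v, GS.Reachable u0 v ∧ G.Adj v a) with hattF
            set AcF := (A \ S).filter (fun a => GS.Reachable u0 a) with hAcF
            have hatt2 : attF.card ≤ 2 := by
              rw [← hS2]
              exact Finset.card_le_card (Finset.filter_subset _ _)
            have hfull : AcF = A \ S := by
              rcases hor with h | h
              · omega
              · have hAS : (A \ S).card = k - 2 := by rw [Finset.card_sdiff_of_subset hSA, hA, hS2]
                exact Finset.eq_of_subset_of_card_le (Finset.filter_subset _ _) (by omega)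
            have hreachAll : ∀ a ∈ A \ S, GS.Reachable u0 a := by
              intro a ha
              have ha' : a ∈ AcF := by rw [hfull]; exact ha
              exact (Finset.mem_filter.1 ha').2
            obtain ⟨c1, c2, c3, hc1, hc2, hc3, g12, g13, g23⟩ := exists_three ht3
            have hPprop : ∀ c ∈ P, c ∈ B ∧ x ∈ N c ∧ y ∈ N c := by
              intro c hc
              obtain ⟨h1, h2, h3⟩ := Finset.mem_filter.1 hc
              exact ⟨h1, h2, h3⟩
            have hthird : ∀ c ∈ P, ∃ zc, N c \ S = {zc} := by
              intro c hc
              obtain ⟨hcB, hxc, hyc⟩ := hPprop c hc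
              have hScN : S ⊆ N c := by
                intro a ha
                rcases Finset.mem_insert.1 ha with rfl | ha'
                · exact hxc
                · rw [Finset.mem_singleton.1 ha']; exact hyc
              have hcard1 : (N c \ S).card = 1 := by
                rw [Finset.card_sdiff_of_subset hScN, hN3 c hcB, hS2]
              exact Finset.card_eq_one.1 hcard1
            obtain ⟨z1, hz1⟩ := hthird c1 hc1
            obtain ⟨z2, hz2⟩ := hthird c2 hc2
            obtain ⟨z3, hz3⟩ := hthird c3 hc3
            have hzmem : ∀ {c z : V}, c ∈ P → N c \ S = {z} → z ∈ N c ∧ z ∉ S := by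
              intro c z hc hz
              have : z ∈ N c \ S := by rw [hz]; exact Finset.mem_singleton_self z
              exact ⟨(Finset.mem_sdiff.1 this).1, (Finset.mem_sdiff.1 this).2⟩
            obtain ⟨hz1N, hz1S⟩ := hzmem hc1 hz1
            obtain ⟨hz2N, hz2S⟩ := hzmem hc2 hz2
            obtain ⟨hz3N, hz3S⟩ := hzmem hc3 hz3
            have hcB : ∀ c ∈ P, c ∈ B := fun c hc => (hPprop c hc).1
            have hzA : ∀ {c z : V}, c ∈ P → z ∈ N c → z ∈ A := fun hc hz =>
              hNsubA _ (hcB _ hc) hz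
            have hdegP : ∀ {c z : V}, c ∈ P → N c \ S = {z} →
                ∀ a b', GS.Adj c a → GS.Adj c b' → a = b' := by
              intro c z hc hz a b' ha hb'
              have haN : a ∈ N c \ S := Finset.mem_sdiff.2
                ⟨(hNadj c (hcB c hc) a).1 ha.1, by simpa using ha.2.2⟩
              have hbN : b' ∈ N c \ S := Finset.mem_sdiff.2
                ⟨(hNadj c (hcB c hc) b').1 hb'.1, by simpa using hb'.2.2⟩
              rw [hz] at haN hbN
              rw [Finset.mem_singleton.1 haN, Finset.mem_singleton.1 hbN]
            set Cset : Set V := {v : V | GS.Reachable u0 v} \ {c1, c2, c3} with hCsetdef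
            have hnotC : ∀ a ∈ A, a ∉ ({c1, c2, c3} : Set V) := by
              intro a ha h
              simp only [Set.mem_insert_iff, Set.mem_singleton_iff] at h
              rcases h with rfl | rfl | rfl
              · exact hBA a (hcB a hc1) ha
              · exact hBA a (hcB a hc2) ha
              · exact hBA a (hcB a hc3) ha
            have hzCset : ∀ {c z : V}, c ∈ P → N c \ S = {z} → z ∈ Cset := by
              intro c z hc hz
              obtain ⟨hzN, hzS⟩ := hzmem hc hz
              refine ⟨hreachAll z (Finset.mem_sdiff.2 ⟨hzA hc hzN, hzS⟩), ?_⟩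
              exact hnotC z (hzA hc hzN)
            have hconnC : ConnOn GS Cset := by
              refine ⟨⟨z1, hzCset hc1 hz1⟩, ?_⟩
              intro u hu v hv
              have hreach_uv : GS.Reachable u v := hu.1.symm.trans hv.1
              obtain ⟨p0⟩ := hreach_uv
              refine ⟨p0.toPath.1, ?_⟩
              intro w hw
              refine ⟨hu.1.trans (walk_support_reach p0.toPath.1 hw), ?_⟩
              intro hwC
              simp only [Set.mem_insert_iff, Set.mem_singleton_iff] at hwC
              have hune : ∀ c', c' ∈ ({c1, c2, c3} : Set V) → c' ≠ u ∧ c' ≠ v := by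
                intro c' hc'
                constructor
                · intro h; exact hu.2 (h ▸ hc')
                · intro h; exact hv.2 (h ▸ hc')
              rcases hwC with rfl | rfl | rfl
              · exact path_avoids_leaf p0.toPath.1 p0.toPath.2 (hdegP hc1 hz1)
                  (hune w (by simp)).1 (hune w (by simp)).2 hw
              · exact path_avoids_leaf p0.toPath.1 p0.toPath.2 (hdegP hc2 hz2)
                  (hune w (by simp)).1 (hune w (by simp)).2 hw
              · exact path_avoids_leaf p0.toPath.1 p0.toPath.2 (hdegP hc3 hz3)
                  (hune w (by simp)).1 (hune w (by simp)).2 hw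
            have hSnotC : ∀ a, a ∈ S → a ∉ Cset := by
              intro a ha hmem
              have hiso : ∀ w, ¬ GS.Adj a w := fun w hadj' => hadj'.2.1 (by simpa using ha)
              have heq : u0 = a := reachable_isolated hiso hmem.1.symm
              exact Finset.disjoint_left.1 hAB (hSA ha) (heq ▸ hu0B)
            refine hK (mk_K33_221 x y c1 c2 c3 Cset hxy
              (hSnotC x (Finset.mem_insert_self x {y}))
              (hSnotC y (Finset.mem_insert.2 (Or.inr (Finset.mem_singleton_self y))))
              g12 g13 g23 (connOn_mono (restrictAway_le G (↑S : Set V)) hconnC) ?_ ?_)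
            · intro c hc
              have hcP : c ∈ P := by rcases hc with rfl | rfl | rfl <;> assumption
              refine ⟨fun h => hBA c (hcB c hcP) (h ▸ hxA), fun h => hBA c (hcB c hcP) (h ▸ hyA), ?_⟩
              intro hmem
              refine hmem.2 ?_
              simp only [Set.mem_insert_iff, Set.mem_singleton_iff]
              tauto
            · intro c hc
              have hcP : c ∈ P := by rcases hc with rfl | rfl | rfl <;> assumption
              obtain ⟨hcB', hxc, hyc⟩ := hPprop c hcP
              refine ⟨(adjBA c hcB' x hxc).symm, (adjBA c hcB' y hyc).symm, ?_⟩
              rcases hc with rfl | rfl | rfl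
              · exact ⟨z1, hzCset hc1 hz1, (adjBA c hcB' z1 hz1N).symm⟩
              · exact ⟨z2, hzCset hc2 hz2, (adjBA c hcB' z2 hz2N).symm⟩
              · exact ⟨z3, hzCset hc3 hz3, (adjBA c hcB' z3 hz3N).symm⟩
        · have hxNb1 : x ∈ N b1 := (Finset.mem_inter.1 hx).1
          have hyNb1 : y ∈ N b1 := (Finset.mem_inter.1 hy).1
          have hxA : x ∈ A := hNsubA b1 hb1 hxNb1
          have hyA : y ∈ A := hNsubA b1 hb1 hyNb1
          have hb1P : b1 ∈ P := Finset.mem_filter.2 ⟨hb1, hxNb1, hyNb1⟩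
          have hb2P : b2 ∈ P := Finset.mem_filter.2
            ⟨hb2, (Finset.mem_inter.1 hx).2, (Finset.mem_inter.1 hy).2⟩
          have hPeq : ({b1, b2} : Finset V) = P := by
            refine Finset.eq_of_subset_of_card_le ?_ ?_
            · intro t ht
              rcases Finset.mem_insert.1 ht with rfl | ht'
              · exact hb1P
              · rw [Finset.mem_singleton.1 ht']; exact hb2P
            · rw [Finset.card_pair hne12]; omega
          have hPonly : ∀ b ∈ B, x ∈ N b → y ∈ N b → b = b1 ∨ b = b2 := by
            intro b hb h1 h2
            have hbP : b ∈ P := Finset.mem_filter.2 ⟨hb, h1, h2⟩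
            rw [← hPeq] at hbP
            rcases Finset.mem_insert.1 hbP with rfl | h'
            · exact Or.inl rfl
            · exact Or.inr (Finset.mem_singleton.1 h')
          set A' := A.erase y with hA'def
          set B' := (B.erase b1).erase b2 with hB'def
          have hB'B : B' ⊆ B := fun b hb => Finset.mem_of_mem_erase (Finset.mem_of_mem_erase hb)
          have hB'1 : ∀ b ∈ B', b ≠ b1 := fun b hb =>
            (Finset.mem_erase.1 (Finset.mem_of_mem_erase hb)).1
          have hB'2 : ∀ b ∈ B', b ≠ b2 := fun b hb => (Finset.mem_erase.1 hb).1
          set W : Set V := {x, b1, y} with hWdef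
          have hWmem : ∀ w, w ∈ W ↔ (w = x ∨ w = b1 ∨ w = y) := by
            intro w
            simp [hWdef, Set.mem_insert_iff]
          have hBnotW : ∀ b ∈ B', b ∉ W := by
            intro b hb hmem
            rcases (hWmem b).1 hmem with rfl | rfl | rfl
            · exact hBA b (hB'B hb) hxA
            · exact hB'1 b hb rfl
            · exact hBA b (hB'B hb) hyA
          have hnotboth : ∀ b ∈ B', ¬ (x ∈ N b ∧ y ∈ N b) := by
            intro b hb hboth
            rcases hPonly b (hB'B hb) hboth.1 hboth.2 with rfl | rfl
            · exact hB'1 b hb rfl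
            · exact hB'2 b hb rfl
          set N' := fun b => if y ∈ N b then insert x ((N b).erase y) else N b with hN'def
          set Gmid := contractTo G W x with hGmid
          set Gnew := bipRestrict Gmid A' B' with hGnew
          have hchar : ∀ b ∈ B', ∀ u, Gnew.Adj b u ↔ u ∈ N' b := by
            intro b hb u
            have hbB := hB'B hb
            have hbW := hBnotW b hb
            constructor
            · rintro ⟨⟨hneq, hcase⟩, _⟩
              rcases hcase with ⟨hGbu, hbW', huW⟩ | ⟨hbx, -, -⟩ | ⟨hux, hbW'', w, hwW, hGwb⟩
              · have huN : u ∈ N b := (hNadj b hbB u).1 hGbu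
                have huy : u ≠ y := fun h => huW ((hWmem u).2 (Or.inr (Or.inr h)))
                by_cases hyb : y ∈ N b
                · simp only [hN'def, if_pos hyb]
                  exact Finset.mem_insert.2 (Or.inr (Finset.mem_erase.2 ⟨huy, huN⟩))
                · simp only [hN'def, if_neg hyb]
                  exact huN
              · exact absurd hbx (fun h => hBA b hbB (by rw [h]; exact hxA))
              · subst hux
                rcases (hWmem w).1 hwW with rfl | rfl | rfl
                · have hxN : w ∈ N b := (hNadj b hbB w).1 hGwb.symm
                  have hyN : y ∉ N b := fun h => hnotboth b hb ⟨hxN, h⟩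
                  simp only [hN'def, if_neg hyN]
                  exact hxN
                · exfalso
                  rcases hbip w b hGwb with ⟨h1, -⟩ | ⟨-, h2⟩
                  · exact hBA w hb1 h1
                  · exact hBA b hbB h2
                · have hyN : w ∈ N b := (hNadj b hbB w).1 hGwb.symm
                  simp only [hN'def, if_pos hyN]
                  exact Finset.mem_insert_self _ _
            · intro huN'
              by_cases hyb : y ∈ N b
              · simp only [hN'def, if_pos hyb] at huN'
                have hxNb : x ∉ N b := fun h => hnotboth b hb ⟨h, hyb⟩
                rcases Finset.mem_insert.1 huN' with rfl | hu'
                · refine ⟨⟨fun h => hBA b hbB (by rw [h]; exact hxA),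
                    Or.inr (Or.inr ⟨rfl, hbW, y, (hWmem y).2 (Or.inr (Or.inr rfl)),
                      (adjBA b hbB y hyb).symm⟩)⟩,
                    Or.inr ⟨hb, Finset.mem_erase.2 ⟨hxy, hxA⟩⟩⟩
                · obtain ⟨huy, huN⟩ := Finset.mem_erase.1 hu'
                  have huA : u ∈ A := hNsubA b hbB huN
                  have huW : u ∉ W := by
                    intro hmem
                    rcases (hWmem u).1 hmem with rfl | rfl | rfl
                    · exact hxNb huN
                    · exact hBA u hb1 huA
                    · exact huy rfl
                  exact ⟨⟨fun h => hBA b hbB (by rw [h]; exact huA),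
                    Or.inl ⟨(hNadj b hbB u).2 huN, hbW, huW⟩⟩,
                    Or.inr ⟨hb, Finset.mem_erase.2 ⟨huy, huA⟩⟩⟩
              · simp only [hN'def, if_neg hyb] at huN'
                have huA : u ∈ A := hNsubA b hbB huN'
                have hGbu : G.Adj b u := (hNadj b hbB u).2 huN'
                by_cases hux : u = x
                · subst hux
                  exact ⟨⟨fun h => hBA b hbB (by rw [h]; exact huA),
                    Or.inr (Or.inr ⟨rfl, hbW, u, (hWmem u).2 (Or.inl rfl), hGbu.symm⟩)⟩,
                    Or.inr ⟨hb, Finset.mem_erase.2 ⟨hxy, hxA⟩⟩⟩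
                · have huW : u ∉ W := by
                    intro hmem
                    rcases (hWmem u).1 hmem with rfl | rfl | rfl
                    · exact hux rfl
                    · exact hBA u hb1 huA
                    · exact hyb huN'
                  refine ⟨⟨fun h => hBA b hbB (by rw [h]; exact huA),
                    Or.inl ⟨hGbu, hbW, huW⟩⟩,
                    Or.inr ⟨hb, Finset.mem_erase.2 ⟨?_, huA⟩⟩⟩
                  intro h
                  exact hyb (by rw [← h]; exact huN')
          have hN3' : ∀ b ∈ B', (N' b).card = 3 := by
            intro b hb
            by_cases hyb : y ∈ N b
            · have hxNb : x ∉ N b := fun h => hnotboth b hb ⟨h, hyb⟩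
              simp only [hN'def, if_pos hyb]
              rw [Finset.card_insert_of_notMem (fun h => hxNb (Finset.mem_of_mem_erase h)),
                Finset.card_erase_of_mem hyb, hN3 b (hB'B hb)]
            · simp only [hN'def, if_neg hyb]
              exact hN3 b (hB'B hb)
          have hA'card : A'.card = k - 1 := by rw [hA'def, Finset.card_erase_of_mem hyA, hA]
          have hB'card : B'.card = B.card - 2 := by
            rw [hB'def, Finset.card_erase_of_mem (Finset.mem_erase.2 ⟨hne12.symm, hb2⟩),
              Finset.card_erase_of_mem hb1]
            omega
          have hminor : K33.IsMinorOf Gnew := by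
            refine IH (k-1) (by omega) Gnew A' B' N' hA'card (by omega) ?_ (fun u v h => h.2)
              hchar hN3' (by omega)
            exact Finset.disjoint_left.2 (fun a ha hb =>
              Finset.disjoint_left.1 hAB (Finset.mem_of_mem_erase ha) (hB'B hb))
          have hstar : ∀ w ∈ W, w = b1 ∨ G.Adj w b1 := by
            intro w hw
            rcases (hWmem w).1 hw with rfl | rfl | rfl
            · exact Or.inr (adjBA b1 hb1 w hxNb1).symm
            · exact Or.inl rfl
            · exact Or.inr (adjBA b1 hb1 w hyNb1).symm
          have hm' : K33.IsMinorOf (contractTo G W x) := by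
            rw [← hGmid]
            exact isMinorOf_mono (bipRestrict_le Gmid A' B') hminor
          exact hK (contract_lift ((hWmem x).2 (Or.inl rfl))
            ((hWmem b1).2 (Or.inr (Or.inl rfl))) hstar hm')
      · push_neg at hpair
        have hk5 : 5 ≤ k := by
          by_contra hlt
          obtain ⟨c1, hc1B, c2, hc2B, hcne⟩ := Finset.one_lt_card.1
            (show 1 < B.card by omega)
          have hint : (N c1 ∩ N c2).card ≤ 1 := by
            have := hpair c1 hc1B c2 hc2B hcne; omega
          have hunion : (N c1 ∪ N c2).card ≤ A.card :=
            Finset.card_le_card (Finset.union_subset (hNsubA c1 hc1B) (hNsubA c2 hc2B))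
          have hiu := Finset.card_union_add_card_inter (N c1) (N c2)
          rw [hN3 c1 hc1B, hN3 c2 hc2B] at hiu
          omega
        obtain ⟨b1, hb1⟩ := Finset.card_pos.1 (show 0 < B.card by omega)
        obtain ⟨x, hx⟩ := Finset.card_pos.1
          (show 0 < (N b1).card by rw [hN3 b1 hb1]; omega)
        have hxA : x ∈ A := hNsubA b1 hb1 hx
        set W : Set V := ↑(N b1) ∪ {b1} with hWdef
        have hWmem : ∀ w, w ∈ W ↔ (w ∈ N b1 ∨ w = b1) := by
          intro w; simp [hWdef]; tauto
        set A' := A \ ((N b1).erase x) with hA'def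
        set B' := B.erase b1 with hB'def
        have hB'B : B' ⊆ B := Finset.erase_subset _ _
        have hB'1 : ∀ b ∈ B', b ≠ b1 := fun b hb => (Finset.mem_erase.1 hb).1
        have hintB : ∀ b ∈ B', (N b ∩ N b1).card ≤ 1 := by
          intro b hb
          have := hpair b (hB'B hb) b1 hb1 (hB'1 b hb); omega
        set N' := fun b => if (N b ∩ N b1).Nonempty then insert x (N b \ N b1) else N b
          with hN'def
        set Gmid := contractTo G W x with hGmid
        set Gnew := bipRestrict Gmid A' B' with hGnew
        have hBnotW : ∀ b ∈ B', b ∉ W := by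
          intro b hb hmem
          rcases (hWmem b).1 hmem with h | rfl
          · exact hBA b (hB'B hb) (hNsubA b1 hb1 h)
          · exact hB'1 _ hb rfl
        have hchar : ∀ b ∈ B', ∀ u, Gnew.Adj b u ↔ u ∈ N' b := by
          intro b hb u
          have hbB := hB'B hb
          have hbW := hBnotW b hb
          constructor
          · rintro ⟨⟨hneq, hcase⟩, -⟩
            rcases hcase with ⟨hGbu, hbW', huW⟩ | ⟨hbx, -, -⟩ | ⟨hux, hbW'', w, hwW, hGwb⟩
            · have huN : u ∈ N b := (hNadj b hbB u).1 hGbu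
              have huN1 : u ∉ N b1 := fun h => huW ((hWmem u).2 (Or.inl h))
              by_cases hne : (N b ∩ N b1).Nonempty
              · simp only [hN'def, if_pos hne]
                exact Finset.mem_insert.2 (Or.inr (Finset.mem_sdiff.2 ⟨huN, huN1⟩))
              · simp only [hN'def, if_neg hne]; exact huN
            · exact absurd hbx (fun h => hBA b hbB (by rw [h]; exact hxA))
            · subst hux
              rcases (hWmem w).1 hwW with hwN | rfl
              · have hwNb : w ∈ N b := (hNadj b hbB w).1 hGwb.symm
                have hne : (N b ∩ N b1).Nonempty := ⟨w, Finset.mem_inter.2 ⟨hwNb, hwN⟩⟩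
                simp only [hN'def, if_pos hne]
                exact Finset.mem_insert_self _ _
              · exfalso
                rcases hbip w b hGwb with ⟨h1, -⟩ | ⟨-, h2⟩
                · exact hBA w hb1 h1
                · exact hBA b hbB h2
          · intro huN'
            by_cases hne : (N b ∩ N b1).Nonempty
            · simp only [hN'def, if_pos hne] at huN'
              rcases Finset.mem_insert.1 huN' with rfl | hu'
              · obtain ⟨w, hw⟩ := hne
                obtain ⟨hwNb, hwN1⟩ := Finset.mem_inter.1 hw
                refine ⟨⟨fun h => hBA b hbB (by rw [h]; exact hxA),
                  Or.inr (Or.inr ⟨rfl, hbW, w, (hWmem w).2 (Or.inl hwN1),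
                    (adjBA b hbB w hwNb).symm⟩)⟩,
                  Or.inr ⟨hb, Finset.mem_sdiff.2 ⟨hxA, fun h => (Finset.mem_erase.1 h).1 rfl⟩⟩⟩
              · obtain ⟨huN, huN1⟩ := Finset.mem_sdiff.1 hu'
                have huA : u ∈ A := hNsubA b hbB huN
                have huW : u ∉ W := by
                  intro hmem
                  rcases (hWmem u).1 hmem with h | rfl
                  · exact huN1 h
                  · exact hBA u hb1 huA
                exact ⟨⟨fun h => hBA b hbB (by rw [h]; exact huA),
                  Or.inl ⟨(hNadj b hbB u).2 huN, hbW, huW⟩⟩,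
                  Or.inr ⟨hb, Finset.mem_sdiff.2
                    ⟨huA, fun h => huN1 (Finset.mem_of_mem_erase h)⟩⟩⟩
            · simp only [hN'def, if_neg hne] at huN'
              have huA : u ∈ A := hNsubA b hbB huN'
              have huN1 : u ∉ N b1 := fun h => hne ⟨u, Finset.mem_inter.2 ⟨huN', h⟩⟩
              have huW : u ∉ W := by
                intro hmem
                rcases (hWmem u).1 hmem with h | rfl
                · exact huN1 h
                · exact hBA u hb1 huA
              exact ⟨⟨fun h => hBA b hbB (by rw [h]; exact huA),
                Or.inl ⟨(hNadj b hbB u).2 huN', hbW, huW⟩⟩,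
                Or.inr ⟨hb, Finset.mem_sdiff.2
                  ⟨huA, fun h => huN1 (Finset.mem_of_mem_erase h)⟩⟩⟩
        have hN3' : ∀ b ∈ B', (N' b).card = 3 := by
          intro b hb
          by_cases hne : (N b ∩ N b1).Nonempty
          · simp only [hN'def, if_pos hne]
            have h1 : (N b ∩ N b1).card = 1 := by
              have h2 := hintB b hb
              have h3 : 0 < (N b ∩ N b1).card := Finset.card_pos.2 hne
              omega
            have hsd : (N b \ N b1).card = 2 := by
              have hh := Finset.card_sdiff_add_card_inter (N b) (N b1)
              rw [hN3 b (hB'B hb)] at hh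
              omega
            have hxnot : x ∉ N b \ N b1 := fun h => (Finset.mem_sdiff.1 h).2 hx
            rw [Finset.card_insert_of_notMem hxnot, hsd]
          · simp only [hN'def, if_neg hne]; exact hN3 b (hB'B hb)
        have hsubA : (N b1).erase x ⊆ A := fun a ha =>
          hNsubA b1 hb1 (Finset.mem_of_mem_erase ha)
        have hA'card : A'.card = k - 2 := by
          rw [hA'def, Finset.card_sdiff_of_subset hsubA, Finset.card_erase_of_mem hx, hN3 b1 hb1, hA]
        have hB'card : B'.card = B.card - 1 := by rw [hB'def, Finset.card_erase_of_mem hb1]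
        have hminor : K33.IsMinorOf Gnew := by
          refine IH (k-2) (by omega) Gnew A' B' N' hA'card (by omega) ?_ (fun u v h => h.2)
            hchar hN3' (by omega)
          exact Finset.disjoint_left.2 (fun a ha hb =>
            Finset.disjoint_left.1 hAB (Finset.mem_sdiff.1 ha).1 (hB'B hb))
        have hstar : ∀ w ∈ W, w = b1 ∨ G.Adj w b1 := by
          intro w hw
          rcases (hWmem w).1 hw with h | rfl
          · exact Or.inr (adjBA b1 hb1 w h).symm
          · exact Or.inl rfl
        have hm' : K33.IsMinorOf (contractTo G W x) := by
          rw [← hGmid]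
          exact isMinorOf_mono (bipRestrict_le Gmid A' B') hminor
        exact hK (contract_lift ((hWmem x).2 (Or.inl hx)) ((hWmem b1).2 (Or.inr rfl))
          hstar hm')

end K33Work

/-- A graph is planar iff it has neither a `K₅` nor a `K₃,₃` minor (Wagner's theorem). -/
def SimpleGraph.IsPlanar {α : Type*} (G : SimpleGraph α) : Prop :=
  ¬ (completeGraph (Fin 5)).IsMinorOf G ∧
  ¬ (completeBipartiteGraph (Fin 3) (Fin 3)).IsMinorOf G

open K33Work in
/-- In a bipartite planar graph whose vertices are partitioned into `k` big vertices and
`ℓ` critical vertices, with all edges joining big to critical, and every critical vertex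
of degree at least 3, we have `ℓ ≤ 2k - 4`. -/
theorem critical_cloud_bound {V : Type*} [Fintype V] (G : SimpleGraph V)
    (hplanar : G.IsPlanar) (Big Crit : Set V)
    (hdisj : Disjoint Big Crit) (hcover : Big ∪ Crit = Set.univ)
    (hedges : ∀ u v, G.Adj u v → (u ∈ Big ∧ v ∈ Crit) ∨ (u ∈ Crit ∧ v ∈ Big))
    (hdeg : ∀ v ∈ Crit, 3 ≤ (G.neighborSet v).ncard) :
    Crit.ncard ≤ 2 * Big.ncard - 4 := by
  classical
  rcases Set.eq_empty_or_nonempty Crit with hC | ⟨v0, hv0⟩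
  · simp [hC]
  set A := (Set.toFinite Big).toFinset with hAdef
  set Bf := (Set.toFinite Crit).toFinset with hBdef
  have hAmem : ∀ a, a ∈ A ↔ a ∈ Big := fun a => Set.Finite.mem_toFinset _
  have hBmem : ∀ b, b ∈ Bf ↔ b ∈ Crit := fun b => Set.Finite.mem_toFinset _
  have hAcard : Big.ncard = A.card := Set.ncard_eq_toFinset_card Big (Set.toFinite Big)
  have hBcard : Crit.ncard = Bf.card := Set.ncard_eq_toFinset_card Crit (Set.toFinite Crit)
  have hsel : ∀ b, b ∈ Crit → ∃ T : Finset V, T.card = 3 ∧ ∀ a ∈ T, G.Adj b a := by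
    intro b hb
    have hfin : Fintype (G.neighborSet b) := Set.Finite.fintype (Set.toFinite _)
    have h3 : 3 ≤ (G.neighborSet b).toFinset.card := by
      rw [← Set.ncard_eq_toFinset_card' (G.neighborSet b)]
      exact hdeg b hb
    obtain ⟨T, hTsub, hT3⟩ := Finset.exists_subset_card_eq h3
    refine ⟨T, hT3, fun a ha => ?_⟩
    have := hTsub ha
    rw [Set.mem_toFinset] at this
    exact this
  have hsel' : ∀ b : V, ∃ T : Finset V, b ∈ Crit → (T.card = 3 ∧ ∀ a ∈ T, G.Adj b a) := by
    intro b
    by_cases hb : b ∈ Crit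
    · obtain ⟨T, h1, h2⟩ := hsel b hb
      exact ⟨T, fun _ => ⟨h1, h2⟩⟩
    · exact ⟨∅, fun h => absurd h hb⟩
  choose Nf hNf using hsel'
  set G' : SimpleGraph V :=
    { Adj := fun u v => (u ∈ Crit ∧ v ∈ Nf u) ∨ (v ∈ Crit ∧ u ∈ Nf v)
      symm := ⟨by rintro u v (h | h); exacts [Or.inr h, Or.inl h]⟩
      loopless := ⟨by
        rintro u (⟨h1, h2⟩ | ⟨h1, h2⟩) <;>
          exact G.loopless.irrefl u ((hNf u h1).2 u h2)⟩ } with hG'def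
  have hG'le : G' ≤ G := by
    rintro u v (⟨h1, h2⟩ | ⟨h1, h2⟩)
    · exact (hNf u h1).2 v h2
    · exact ((hNf v h1).2 u h2).symm
  have hdisj' : Disjoint A Bf := by
    rw [Finset.disjoint_left]
    intro a ha hb
    exact Set.disjoint_left.1 hdisj ((hAmem a).1 ha) ((hBmem a).1 hb)
  have hbip' : ∀ u v, G'.Adj u v → (u ∈ A ∧ v ∈ Bf) ∨ (u ∈ Bf ∧ v ∈ A) := by
    have key : ∀ u v, u ∈ Crit → v ∈ Nf u → u ∈ Bf ∧ v ∈ A := by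
      intro u v h1 h2
      have hadj : G.Adj u v := (hNf u h1).2 v h2
      rcases hedges u v hadj with ⟨hub, hvc⟩ | ⟨huc, hvb⟩
      · exact absurd h1 (Set.disjoint_left.1 hdisj hub)
      · exact ⟨(hBmem u).2 huc, (hAmem v).2 hvb⟩
    rintro u v (⟨h1, h2⟩ | ⟨h1, h2⟩)
    · exact Or.inr (key u v h1 h2)
    · obtain ⟨hb, ha⟩ := key v u h1 h2
      exact Or.inl ⟨ha, hb⟩
  have hNadj' : ∀ b ∈ Bf, ∀ u, G'.Adj b u ↔ u ∈ Nf b := by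
    intro b hb u
    have hbC : b ∈ Crit := (hBmem b).1 hb
    constructor
    · rintro (⟨h1, h2⟩ | ⟨h1, h2⟩)
      · exact h2
      · exfalso
        have hadj : G.Adj u b := (hNf u h1).2 b h2
        rcases hedges u b hadj with ⟨hub, hbc⟩ | ⟨huc, hbb⟩
        · exact Set.disjoint_left.1 hdisj hub h1
        · exact Set.disjoint_left.1 hdisj hbb hbC
    · intro h
      exact Or.inl ⟨hbC, h⟩
  have hN3' : ∀ b ∈ Bf, (Nf b).card = 3 := fun b hb => (hNf b ((hBmem b).1 hb)).1
  have hA3 : 3 ≤ A.card := by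
    have hsub : Nf v0 ⊆ A := by
      intro a ha
      have hadj : G.Adj v0 a := (hNf v0 hv0).2 a ha
      rcases hedges v0 a hadj with ⟨hub, _⟩ | ⟨_, hvb⟩
      · exact absurd hv0 (Set.disjoint_left.1 hdisj hub)
      · exact (hAmem a).2 hvb
    calc 3 = (Nf v0).card := ((hNf v0 hv0).1).symm
    _ ≤ A.card := Finset.card_le_card hsub
  by_contra hcon
  have hcard : 2 * A.card ≤ Bf.card + 3 := by
    rw [hAcard, hBcard] at hcon
    omega
  exact hplanar.2 (isMinorOf_mono hG'le
    (core A.card G' A Bf Nf rfl hA3 hdisj' hbip' hNadj' hN3' hcard))
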